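/- Let $g : K \to L$ be a continuous surjection between compact metrizable spaces and $f = P(g) : P(K) \to P(L)$ the pushforward map on Borel probability measures. Let $U_1, \dots, U_n$ be pairwise disjoint closed subsets of $K$ and $c_1, \dots, c_n \geq 0$. Then $f(\{\nu : \nu(U_i) > c_i \ \forall i\}) = \{\lambda \in P(L) : \lambda(g(\bigcup_{i \in A} U_i)) > \sum_{i \in A} c_i \text{ for every nonempty } A \subseteq \{1,\dots,n\}\}$. -/

import Mathlib

open MeasureTheory Finset
open scoped NNReal ENNReal

namespace Stmt17Aux

variable {n : ℕ}

/-- total supply available to a demand set `A` -/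
def fval (m : Finset (Fin n) → ℝ≥0) (A : Finset (Fin n)) : ℝ≥0 :=
  ∑ B ∈ Finset.univ.filter (fun B => (A ∩ B).Nonempty), m B

/-- `t` is a feasible assignment for demands `d` on `ι` with supplies `m` -/
def IsSol (ι : Finset (Fin n)) (m : Finset (Fin n) → ℝ≥0) (d : Fin n → ℝ≥0)
    (t : Finset (Fin n) → Fin n → ℝ≥0) : Prop :=
  (∀ B i, t B i ≠ 0 → i ∈ B ∧ i ∈ ι) ∧ (∀ B, ∑ i, t B i ≤ m B) ∧
    (∀ i ∈ ι, d i ≤ ∑ B, t B i)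

def Feas (ι : Finset (Fin n)) (m : Finset (Fin n) → ℝ≥0) (d : Fin n → ℝ≥0) : Prop :=
  ∀ A ⊆ ι, A.Nonempty → ∑ i ∈ A, d i ≤ fval m A

lemma fval_eq (m : Finset (Fin n) → ℝ≥0) (A : Finset (Fin n)) :
    fval m A = ∑ B : Finset (Fin n), if (A ∩ B).Nonempty then m B else 0 := by
  rw [fval, Finset.sum_filter]

lemma fval_split (m : Finset (Fin n) → ℝ≥0) {A₀ A : Finset (Fin n)} :
    fval m (A₀ ∪ A) = fval m A₀ + fval (fun B => if (A₀ ∩ B).Nonempty then 0 else m B) A := by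
  classical
  rw [fval_eq, fval_eq, fval_eq, ← Finset.sum_add_distrib]
  refine Finset.sum_congr rfl fun B _ => ?_
  have hiff : ((A₀ ∪ A) ∩ B).Nonempty ↔ (A₀ ∩ B).Nonempty ∨ (A ∩ B).Nonempty := by
    rw [Finset.union_inter_distrib_right]
    constructor
    · rintro ⟨x, hx⟩
      rcases Finset.mem_union.1 hx with h | h
      · exact Or.inl ⟨x, h⟩
      · exact Or.inr ⟨x, h⟩
    · rintro (⟨x, hx⟩ | ⟨x, hx⟩)
      · exact ⟨x, Finset.mem_union.2 (Or.inl hx)⟩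
      · exact ⟨x, Finset.mem_union.2 (Or.inr hx)⟩
  by_cases h₀ : (A₀ ∩ B).Nonempty <;> by_cases hA : (A ∩ B).Nonempty <;>
    simp [hiff, h₀, hA]

lemma Feas.mono {ι ι' : Finset (Fin n)} {m d} (h : Feas ι m d) (hsub : ι' ⊆ ι) :
    Feas ι' m d := fun A hA => h A (hA.trans hsub)

/-- the tight-set splitting of feasibility. -/
lemma Feas.compl {ι A₀ : Finset (Fin n)} {m d} (h : Feas ι m d) (hsub : A₀ ⊆ ι)
    (htight : ∑ i ∈ A₀, d i = fval m A₀) :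
    Feas (ι \ A₀) (fun B => if (A₀ ∩ B).Nonempty then 0 else m B) d := by
  intro A hA hAne
  have hdisj : Disjoint A₀ A := by
    refine Finset.disjoint_left.2 fun i hi hi' => ?_
    exact (Finset.mem_sdiff.1 (hA hi')).2 hi
  have hsum : ∑ i ∈ A₀ ∪ A, d i = ∑ i ∈ A₀, d i + ∑ i ∈ A, d i :=
    Finset.sum_union hdisj
  have hle : ∑ i ∈ A₀ ∪ A, d i ≤ fval m (A₀ ∪ A) := by
    refine h _ (Finset.union_subset hsub (hA.trans (Finset.sdiff_subset))) ?_
    exact Finset.Nonempty.mono Finset.subset_union_right hAne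
  rw [hsum, fval_split m, ← htight] at hle
  exact le_of_add_le_add_left hle

lemma IsSol.combine {ι A₀ : Finset (Fin n)} {m d t₁ t₂} (hsub : A₀ ⊆ ι)
    (h₁ : IsSol A₀ m d t₁)
    (h₂ : IsSol (ι \ A₀) (fun B => if (A₀ ∩ B).Nonempty then 0 else m B) d t₂) :
    IsSol ι m d (t₁ + t₂) := by
  obtain ⟨hs₁, hm₁, hd₁⟩ := h₁
  obtain ⟨hs₂, hm₂, hd₂⟩ := h₂
  refine ⟨fun B i hne => ?_, fun B => ?_, fun i hi => ?_⟩
  · have : t₁ B i ≠ 0 ∨ t₂ B i ≠ 0 := by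
      by_contra hcon
      push_neg at hcon
      simp [Pi.add_apply, hcon.1, hcon.2] at hne
    rcases this with h | h
    · exact ⟨(hs₁ B i h).1, hsub (hs₁ B i h).2⟩
    · exact ⟨(hs₂ B i h).1, (Finset.mem_sdiff.1 (hs₂ B i h).2).1⟩
  · by_cases hB : (A₀ ∩ B).Nonempty
    · have ht₂ : ∑ i, t₂ B i = 0 := le_antisymm (by simpa [hB] using hm₂ B) zero_le
      have : ∀ i, t₂ B i = 0 := by
        intro i
        exact Finset.sum_eq_zero_iff.1 ht₂ i (Finset.mem_univ i)
      calc ∑ i, (t₁ + t₂) B i = ∑ i, t₁ B i := by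
            refine Finset.sum_congr rfl fun i _ => by simp [this i]
        _ ≤ m B := hm₁ B
    · have ht₁ : ∀ i, t₁ B i = 0 := by
        intro i
        by_contra hne
        exact hB ⟨i, Finset.mem_inter.2 ⟨(hs₁ B i hne).2, (hs₁ B i hne).1⟩⟩
      calc ∑ i, (t₁ + t₂) B i = ∑ i, t₂ B i := by
            refine Finset.sum_congr rfl fun i _ => by simp [ht₁ i]
        _ ≤ m B := by simpa [hB] using hm₂ B
  · by_cases hiA : i ∈ A₀
    · calc d i ≤ ∑ B, t₁ B i := hd₁ i hiA
        _ ≤ ∑ B, (t₁ + t₂) B i := Finset.sum_le_sum fun B _ => le_add_of_le_of_nonneg le_rfl zero_le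
    · calc d i ≤ ∑ B, t₂ B i := hd₂ i (Finset.mem_sdiff.2 ⟨hi, hiA⟩)
        _ ≤ ∑ B, (t₁ + t₂) B i := Finset.sum_le_sum fun B _ => le_add_of_nonneg_of_le zero_le le_rfl

end Stmt17Aux
namespace Stmt17Aux
variable {n : ℕ}

lemma isSol_empty (m : Finset (Fin n) → ℝ≥0) (d : Fin n → ℝ≥0) : IsSol ∅ m d 0 :=
  ⟨fun _ _ h => absurd rfl h, fun B => by simp, fun i hi => absurd hi (Finset.notMem_empty i)⟩

lemma IsSol.enlarge {ι ι' : Finset (Fin n)} {m d t} (hsub : ι' ⊆ ι)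
    (hd0 : ∀ i ∈ ι, i ∉ ι' → d i = 0) (h : IsSol ι' m d t) : IsSol ι m d t := by
  refine ⟨fun B i hne => ⟨(h.1 B i hne).1, hsub (h.1 B i hne).2⟩, h.2.1, fun i hi => ?_⟩
  by_cases hi' : i ∈ ι'
  · exact h.2.2 i hi'
  · rw [hd0 i hi hi']; exact zero_le

lemma meas_step {a b c c' N q : ℕ} (h : b < a) (hc : c' ≤ q) (hN : a * (q + 1) + c ≤ N + 1) :
    b * (q + 1) + c' ≤ N := by
  have h2 : b * (q + 1) + (q + 1) ≤ a * (q + 1) := by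
    rw [← Nat.succ_mul]
    exact Nat.mul_le_mul_right _ h
  generalize b * (q + 1) = P at h2 ⊢
  generalize a * (q + 1) = Q at h2 hN
  omega

lemma meas_step2 {a c c' N q : ℕ} (h : c' < c) (hN : a * (q + 1) + c ≤ N + 1) :
    a * (q + 1) + c' ≤ N := by
  generalize a * (q + 1) = P at hN ⊢
  omega

lemma cnt_le (m : Finset (Fin n) → ℝ≥0) :
    (Finset.univ.filter fun B => m B ≠ 0).card ≤ 2 ^ n := by
  classical
  calc (Finset.univ.filter fun B => m B ≠ 0).card ≤ Finset.univ.card :=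
        Finset.card_filter_le _ _
    _ = 2 ^ n := by rw [Finset.card_univ, Fintype.card_finset, Fintype.card_fin]

lemma IsSol.step {ι : Finset (Fin n)} {m : Finset (Fin n) → ℝ≥0} {d : Fin n → ℝ≥0}
    {i₀ : Fin n} {B₀ : Finset (Fin n)} {ε : ℝ≥0}
    (hi₀B₀ : i₀ ∈ B₀) (hi₀ι : i₀ ∈ ι) (hεd : ε ≤ d i₀) (hεm : ε ≤ m B₀)
    {t' : Finset (Fin n) → Fin n → ℝ≥0}
    (h : IsSol ι (Function.update m B₀ (m B₀ - ε)) (Function.update d i₀ (d i₀ - ε)) t') :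
    IsSol ι m d (fun B i => t' B i + if B = B₀ ∧ i = i₀ then ε else 0) := by
  classical
  obtain ⟨hs, hm, hd⟩ := h
  refine ⟨fun B i hne => ?_, fun B => ?_, fun i hi => ?_⟩
  · dsimp only at hne
    by_cases h1 : t' B i ≠ 0
    · exact hs B i h1
    · push_neg at h1
      rw [h1, zero_add] at hne
      split_ifs at hne with h2
      · obtain ⟨rfl, rfl⟩ := h2
        exact ⟨hi₀B₀, hi₀ι⟩
      · exact absurd rfl hne
  · dsimp only
    rw [Finset.sum_add_distrib]
    by_cases hB : B = B₀
    · have h2 := hm B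
      rw [hB, Function.update_self] at h2
      have h1 : (∑ i : Fin n, if B = B₀ ∧ i = i₀ then ε else 0) = ε := by simp [hB]
      rw [h1, hB]
      calc (∑ i, t' B₀ i) + ε ≤ (m B₀ - ε) + ε := add_le_add_left h2 _
        _ = m B₀ := tsub_add_cancel_of_le hεm
    · have h1 : (∑ i : Fin n, if B = B₀ ∧ i = i₀ then ε else 0) = 0 := by simp [hB]
      rw [h1, add_zero]
      have h2 := hm B
      rwa [Function.update_of_ne hB] at h2
  · dsimp only
    rw [Finset.sum_add_distrib]
    by_cases hii : i = i₀
    · have h1 : (∑ B : Finset (Fin n), if B = B₀ ∧ i = i₀ then ε else 0) = ε := by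
        simp [hii]
      rw [h1]
      have h2 := hd i hi
      rw [hii, Function.update_self] at h2
      calc d i = (d i - ε) + ε := by rw [hii]; exact (tsub_add_cancel_of_le hεd).symm
        _ ≤ (∑ B, t' B i) + ε := by
            refine add_le_add_left ?_ _
            rw [hii]; exact h2
    · have h1 : (∑ B : Finset (Fin n), if B = B₀ ∧ i = i₀ then ε else 0) = 0 := by
        simp [hii]
      rw [h1, add_zero]
      have h2 := hd i hi
      rwa [Function.update_of_ne hii] at h2

end Stmt17Aux
namespace Stmt17Aux
variable {n : ℕ}

theorem gale_aux (N : ℕ) : ∀ (ι : Finset (Fin n)) (m : Finset (Fin n) → ℝ≥0) (d : Fin n → ℝ≥0),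
    ι.card * (2 ^ n + 1) + (Finset.univ.filter fun B => m B ≠ 0).card ≤ N →
    Feas ι m d → ∃ t, IsSol ι m d t := by
  classical
  induction N with
  | zero =>
    intro ι m d hN _
    have h0 : ι.card * (2 ^ n + 1) = 0 :=
      Nat.eq_zero_of_le_zero (le_trans (Nat.le_add_right _ _) hN)
    have hc : ι.card = 0 := by
      rcases Nat.mul_eq_zero.1 h0 with h | h
      · exact h
      · exact absurd h (Nat.succ_ne_zero _)
    rw [Finset.card_eq_zero] at hc
    subst hc
    exact ⟨0, isSol_empty m d⟩
  | succ N IH =>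
    intro ι m d hN hF
    by_cases hι : ι = ∅
    · subst hι
      exact ⟨0, isSol_empty m d⟩
    -- drop zero demands
    by_cases hd0 : ∃ i ∈ ι, d i = 0
    · obtain ⟨i₀, hi₀, hdi₀⟩ := hd0
      have hcard : (ι.erase i₀).card < ι.card := Finset.card_erase_lt_of_mem hi₀
      obtain ⟨t, ht⟩ := IH (ι.erase i₀) m d (meas_step hcard (cnt_le m) hN)
        (hF.mono (Finset.erase_subset _ _))
      refine ⟨t, ht.enlarge (Finset.erase_subset _ _) fun i hi hi' => ?_⟩
      have : i = i₀ := by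
        by_contra hne
        exact hi' (Finset.mem_erase.2 ⟨hne, hi⟩)
      rw [this]; exact hdi₀
    push_neg at hd0
    -- tight set case
    by_cases htight : ∃ A₀, A₀ ⊆ ι ∧ A₀.Nonempty ∧ A₀ ≠ ι ∧ ∑ i ∈ A₀, d i = fval m A₀
    · obtain ⟨A₀, hsub, hne, hneq, htt⟩ := htight
      have h1 : A₀.card < ι.card := Finset.card_lt_card (hsub.ssubset_of_ne hneq)
      have h2 : (ι \ A₀).card < ι.card := by
        have e1 := Finset.card_sdiff_of_subset hsub
        have e2 := Finset.card_pos.2 hne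
        have e3 := Finset.card_le_card hsub
        omega
      obtain ⟨t₁, ht₁⟩ := IH A₀ m d (meas_step h1 (cnt_le m) hN) (hF.mono hsub)
      obtain ⟨t₂, ht₂⟩ := IH (ι \ A₀) _ d (meas_step h2 (cnt_le _) hN) (hF.compl hsub htt)
      exact ⟨t₁ + t₂, IsSol.combine hsub ht₁ ht₂⟩
    push_neg at htight
    -- epsilon reduction case
    obtain ⟨i₀, hi₀⟩ := Finset.nonempty_iff_ne_empty.2 hι
    have hdi₀ : d i₀ ≠ 0 := hd0 i₀ hi₀
    have hsingle : d i₀ ≤ fval m {i₀} := by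
      have := hF {i₀} (Finset.singleton_subset_iff.2 hi₀) ⟨i₀, Finset.mem_singleton_self i₀⟩
      simpa using this
    have hfne : fval m {i₀} ≠ 0 := fun h => hdi₀ (le_antisymm (h ▸ hsingle) zero_le)
    obtain ⟨B₀, hB₀mem, hmB₀⟩ := Finset.exists_ne_zero_of_sum_ne_zero hfne
    have hi₀B₀ : i₀ ∈ B₀ := by
      obtain ⟨x, hx⟩ := (Finset.mem_filter.1 hB₀mem).2
      obtain ⟨hx1, hx2⟩ := Finset.mem_inter.1 hx
      rw [Finset.mem_singleton] at hx1
      rwa [hx1] at hx2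
    set 𝒜 := ι.powerset.filter (fun A => A.Nonempty ∧ i₀ ∉ A ∧ (A ∩ B₀).Nonempty) with h𝒜
    set S : Finset ℝ≥0 :=
      insert (d i₀) (insert (m B₀) (𝒜.image fun A => fval m A - ∑ i ∈ A, d i)) with hS
    have hSne : S.Nonempty := Finset.insert_nonempty _ _
    set ε := S.min' hSne with hε
    have hstrict : ∀ A ∈ 𝒜, ∑ i ∈ A, d i < fval m A := by
      intro A hA
      rw [h𝒜, Finset.mem_filter, Finset.mem_powerset] at hA
      obtain ⟨hsub, hne, hni, _⟩ := hA
      refine lt_of_le_of_ne (hF A hsub hne) (htight A hsub hne ?_)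
      rintro rfl
      exact hni hi₀
    have hεd : ε ≤ d i₀ := Finset.min'_le S _ (by rw [hS]; exact Finset.mem_insert_self _ _)
    have hεm : ε ≤ m B₀ := Finset.min'_le S _
      (by rw [hS]; exact Finset.mem_insert_of_mem (Finset.mem_insert_self _ _))
    have hεgap : ∀ A ∈ 𝒜, ε ≤ fval m A - ∑ i ∈ A, d i := fun A hA => Finset.min'_le S _
      (by rw [hS]
          exact Finset.mem_insert_of_mem (Finset.mem_insert_of_mem (Finset.mem_image_of_mem _ hA)))
    have hεpos : 0 < ε := by
      have hmem := S.min'_mem hSne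
      rw [← hε, hS] at hmem
      rcases Finset.mem_insert.1 hmem with h | hmem'
      · rw [h]; exact pos_iff_ne_zero.2 hdi₀
      rcases Finset.mem_insert.1 hmem' with h | hmem''
      · rw [h]; exact pos_iff_ne_zero.2 hmB₀
      obtain ⟨A, hA, hAe⟩ := Finset.mem_image.1 hmem''
      rw [← hAe]
      exact tsub_pos_of_lt (hstrict A hA)
    set m' := Function.update m B₀ (m B₀ - ε) with hm'
    set d' := Function.update d i₀ (d i₀ - ε) with hd'
    have hd'sum : ∀ A : Finset (Fin n), i₀ ∉ A → ∑ i ∈ A, d' i = ∑ i ∈ A, d i := by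
      intro A hA
      refine Finset.sum_congr rfl fun i hi => ?_
      rw [hd']
      refine Function.update_of_ne (fun h => hA ?_) _ _
      rwa [← h]
    have hd'sum2 : ∀ A : Finset (Fin n), i₀ ∈ A → (∑ i ∈ A, d' i) + ε = ∑ i ∈ A, d i := by
      intro A hA
      rw [hd', Finset.sum_update_of_mem hA, add_right_comm, tsub_add_cancel_of_le hεd,
        Finset.sdiff_singleton_eq_erase, Finset.add_sum_erase _ _ hA]
    have hfval' : ∀ A : Finset (Fin n), (A ∩ B₀).Nonempty → fval m' A + ε = fval m A := by
      intro A hA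
      have hB₀f : B₀ ∈ Finset.univ.filter (fun B => (A ∩ B).Nonempty) :=
        Finset.mem_filter.2 ⟨Finset.mem_univ _, hA⟩
      rw [fval, fval, hm', Finset.sum_update_of_mem hB₀f, add_right_comm,
        tsub_add_cancel_of_le hεm, Finset.sdiff_singleton_eq_erase,
        Finset.add_sum_erase _ _ hB₀f]
    have hfval'' : ∀ A : Finset (Fin n), ¬(A ∩ B₀).Nonempty → fval m' A = fval m A := by
      intro A hA
      rw [fval, fval]
      refine Finset.sum_congr rfl fun B hB => ?_
      have hBne : B ≠ B₀ := fun h => hA (h ▸ (Finset.mem_filter.1 hB).2)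
      rw [hm']
      exact Function.update_of_ne hBne _ _
    have hFred : Feas ι m' d' := by
      intro A hsub hne
      by_cases hiA : i₀ ∈ A
      · have hAB : (A ∩ B₀).Nonempty := ⟨i₀, Finset.mem_inter.2 ⟨hiA, hi₀B₀⟩⟩
        refine le_of_add_le_add_right (?_ : (∑ i ∈ A, d' i) + ε ≤ fval m' A + ε)
        rw [hd'sum2 A hiA, hfval' A hAB]
        exact hF A hsub hne
      · rw [hd'sum A hiA]
        by_cases hAB : (A ∩ B₀).Nonempty
        · have hA𝒜 : A ∈ 𝒜 := by
            rw [h𝒜]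
            exact Finset.mem_filter.2 ⟨Finset.mem_powerset.2 hsub, hne, hiA, hAB⟩
          refine le_of_add_le_add_right (?_ : (∑ i ∈ A, d i) + ε ≤ fval m' A + ε)
          rw [hfval' A hAB]
          calc (∑ i ∈ A, d i) + ε ≤ (∑ i ∈ A, d i) + (fval m A - ∑ i ∈ A, d i) :=
                add_le_add_right (hεgap A hA𝒜) _
            _ = fval m A := add_tsub_cancel_of_le (hF A hsub hne)
        · rw [hfval'' A hAB]
          exact hF A hsub hne
    -- now get a solution for the reduced instance (ι, m', d')
    have hsol' : ∃ t', IsSol ι m' d' t' := by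
      have hmem := S.min'_mem hSne
      rw [← hε, hS] at hmem
      rcases Finset.mem_insert.1 hmem with hcase | hmem'
      · -- ε = d i₀ : remove i₀
        have hcard : (ι.erase i₀).card < ι.card := Finset.card_erase_lt_of_mem hi₀
        obtain ⟨t', ht'⟩ := IH (ι.erase i₀) m' d' (meas_step hcard (cnt_le m') hN)
          (hFred.mono (Finset.erase_subset _ _))
        refine ⟨t', ht'.enlarge (Finset.erase_subset _ _) fun i hi hi' => ?_⟩
        have : i = i₀ := by
          by_contra hne2
          exact hi' (Finset.mem_erase.2 ⟨hne2, hi⟩)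
        rw [this, hd', Function.update_self, ← hcase, tsub_self]
      rcases Finset.mem_insert.1 hmem' with hcase | hmem''
      · -- ε = m B₀ : supply count drops
        have hm'B₀ : m' B₀ = 0 := by rw [hm', Function.update_self, ← hcase, tsub_self]
        have hss : (Finset.univ.filter fun B => m' B ≠ 0) ⊂
            (Finset.univ.filter fun B => m B ≠ 0) := by
          have hsub2 : (Finset.univ.filter fun B => m' B ≠ 0) ⊆
              (Finset.univ.filter fun B => m B ≠ 0) := by
            intro B hB
            rw [Finset.mem_filter] at hB ⊢
            refine ⟨hB.1, ?_⟩
            have hBne : B ≠ B₀ := fun h => hB.2 (by rw [h]; exact hm'B₀)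
            rw [hm', Function.update_of_ne hBne] at hB
            exact hB.2
          refine (Finset.ssubset_iff_of_subset hsub2).2
            ⟨B₀, Finset.mem_filter.2 ⟨Finset.mem_univ _, hmB₀⟩,
              fun hc => (Finset.mem_filter.1 hc).2 hm'B₀⟩
        exact IH ι m' d' (meas_step2 (Finset.card_lt_card hss) hN) hFred
      · -- ε = gap A₀ : a tight set appears
        obtain ⟨A₀, hA₀, hAe⟩ := Finset.mem_image.1 hmem''
        rw [h𝒜, Finset.mem_filter, Finset.mem_powerset] at hA₀
        obtain ⟨hA₀sub, hA₀ne, hA₀ni, hA₀B₀⟩ := hA₀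
        have htt' : ∑ i ∈ A₀, d' i = fval m' A₀ := by
          rw [hd'sum A₀ hA₀ni]
          refine add_right_cancel (b := ε) ?_
          rw [hfval' A₀ hA₀B₀, ← hAe, add_tsub_cancel_of_le (hF A₀ hA₀sub hA₀ne)]
        have h1 : A₀.card < ι.card := by
          refine Finset.card_lt_card (Finset.ssubset_iff_of_subset hA₀sub |>.2 ⟨i₀, hi₀, hA₀ni⟩)
        have h2 : (ι \ A₀).card < ι.card := by
          have e1 := Finset.card_sdiff_of_subset hA₀sub
          have e2 := Finset.card_pos.2 hA₀ne
          have e3 := Finset.card_le_card hA₀sub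
          omega
        obtain ⟨t₁, ht₁⟩ := IH A₀ m' d' (meas_step h1 (cnt_le m') hN) (hFred.mono hA₀sub)
        obtain ⟨t₂, ht₂⟩ := IH (ι \ A₀) _ d' (meas_step h2 (cnt_le _) hN)
          (hFred.compl hA₀sub htt')
        exact ⟨t₁ + t₂, IsSol.combine hA₀sub ht₁ ht₂⟩
    obtain ⟨t', ht'⟩ := hsol'
    exact ⟨_, IsSol.step hi₀B₀ hi₀ hεd hεm ht'⟩

theorem gale (m : Finset (Fin n) → ℝ≥0) (d : Fin n → ℝ≥0)
    (hF : ∀ A : Finset (Fin n), A.Nonempty → ∑ i ∈ A, d i ≤ fval m A) :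
    ∃ t : Finset (Fin n) → Fin n → ℝ≥0,
      (∀ B i, t B i ≠ 0 → i ∈ B) ∧ (∀ B, ∑ i, t B i ≤ m B) ∧ (∀ i, d i ≤ ∑ B, t B i) := by
  classical
  obtain ⟨t, ht⟩ := gale_aux (Finset.univ.card * (2 ^ n + 1) +
      (Finset.univ.filter fun B => m B ≠ 0).card) Finset.univ m d le_rfl
    (fun A _ hA => hF A hA)
  exact ⟨t, fun B i h => (ht.1 B i h).1, ht.2.1, fun i => ht.2.2 i (Finset.mem_univ i)⟩

end Stmt17Aux
set_option linter.unusedSectionVars false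
namespace Stmt17Aux

open Set Metric Filter Topology

section SectionConstruction

variable {K L : Type*} [MetricSpace K] [CompactSpace K]
  [MeasurableSpace K] [BorelSpace K]
  [TopologicalSpace L] [T2Space L] [MeasurableSpace L] [BorelSpace L]

open Classical in
/-- indices of the closed sets accepted so far in the shrinking procedure -/
noncomputable def secC (g : K → L) (C : Set K) (V : ℕ → Set K) : ℕ → L → Finset ℕ
  | 0, _ => ∅
  | k+1, y =>
    if y ∈ g '' ((C ∩ ⋂ j ∈ secC g C V k y, V j) ∩ V k) then insert k (secC g C V k y)
    else secC g C V k y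

noncomputable def secS (g : K → L) (C : Set K) (V : ℕ → Set K) (k : ℕ) (y : L) : Set K :=
  C ∩ ⋂ j ∈ secC g C V k y, V j

variable {g : K → L} {C : Set K} {V : ℕ → Set K}

lemma secS_zero (y : L) : secS g C V 0 y = C := by
  simp [secS, secC]

lemma secS_succ_of_mem {k : ℕ} {y : L} (h : y ∈ g '' (secS g C V k y ∩ V k)) :
    secS g C V (k+1) y = secS g C V k y ∩ V k := by
  rw [secS] at h
  rw [secS, secC, if_pos h, Finset.set_biInter_insert, secS]
  ext x
  simp only [Set.mem_inter_iff, Set.mem_iInter]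
  tauto

lemma secS_succ_of_not_mem {k : ℕ} {y : L} (h : y ∉ g '' (secS g C V k y ∩ V k)) :
    secS g C V (k+1) y = secS g C V k y := by
  rw [secS] at h
  rw [secS, secC, if_neg h, secS]

lemma secS_succ_subset (k : ℕ) (y : L) : secS g C V (k+1) y ⊆ secS g C V k y := by
  by_cases h : y ∈ g '' (secS g C V k y ∩ V k)
  · rw [secS_succ_of_mem h]
    exact Set.inter_subset_left
  · rw [secS_succ_of_not_mem h]

lemma secS_antitone {k k' : ℕ} (h : k ≤ k') (y : L) : secS g C V k' y ⊆ secS g C V k y := by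
  induction k' with
  | zero => rw [Nat.le_zero.1 h]
  | succ k' IH =>
    rcases Nat.lt_or_ge k (k'+1) with h' | h'
    · exact (secS_succ_subset k' y).trans (IH (Nat.lt_succ_iff.1 h'))
    · rw [le_antisymm h h']

lemma secS_closed (hC : IsClosed C) (hV : ∀ j, IsClosed (V j)) (k : ℕ) (y : L) :
    IsClosed (secS g C V k y) :=
  hC.inter (isClosed_biInter fun j _ => hV j)

lemma secS_inter_nonempty {y : L} (hy : y ∈ g '' C) (k : ℕ) :
    (secS g C V k y ∩ g ⁻¹' {y}).Nonempty := by
  induction k with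
  | zero =>
    obtain ⟨x, hx, hgx⟩ := hy
    exact ⟨x, by rw [secS_zero]; exact hx, by simp [hgx]⟩
  | succ k IH =>
    by_cases h : y ∈ g '' (secS g C V k y ∩ V k)
    · rw [secS_succ_of_mem h]
      obtain ⟨x, hx, hgx⟩ := h
      exact ⟨x, hx, by simp [hgx]⟩
    · rw [secS_succ_of_not_mem h]
      exact IH

lemma measurable_comp_countable_fibers {α β γ : Type*} [MeasurableSpace α] [MeasurableSpace γ]
    [Countable β] {c : α → β} (h : ∀ b, MeasurableSet (c ⁻¹' {b})) (f : β → γ) :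
    Measurable (f ∘ c) := by
  intro s _
  have : (f ∘ c) ⁻¹' s = ⋃ b ∈ {b | f b ∈ s}, c ⁻¹' {b} := by
    ext a
    simp
  rw [this]
  exact MeasurableSet.biUnion (Set.to_countable _) fun b _ => h b

lemma secC_fiber_measurable (hg : Continuous g) (hC : IsClosed C) (hV : ∀ j, IsClosed (V j)) :
    ∀ (k : ℕ) (F : Finset ℕ), MeasurableSet ((fun y => secC g C V k y) ⁻¹' {F}) := by
  classical
  intro k
  induction k with
  | zero =>
    intro F
    by_cases hF : F = ∅
    · have : ((fun y => secC g C V 0 y) ⁻¹' {F}) = Set.univ := by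
        ext y; simp [secC, hF.symm]
      rw [this]; exact MeasurableSet.univ
    · have : ((fun y => secC g C V 0 y) ⁻¹' {F}) = ∅ := by
        ext y; simp [secC]; exact fun h => hF h.symm
      rw [this]; exact MeasurableSet.empty
  | succ k IH =>
    intro F
    set W : Finset ℕ → Set L := fun F' => g '' ((C ∩ ⋂ j ∈ F', V j) ∩ V k) with hW
    have hWmeas : ∀ F', MeasurableSet (W F') := by
      intro F'
      have hcl : IsClosed ((C ∩ ⋂ j ∈ F', V j) ∩ V k) :=
        (hC.inter (isClosed_biInter fun j _ => hV j)).inter (hV k)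
      exact ((hcl.isCompact.image hg).isClosed).measurableSet
    have heq : ((fun y => secC g C V (k+1) y) ⁻¹' {F}) =
        ⋃ (F' : Finset ℕ), ((fun y => secC g C V k y) ⁻¹' {F'}) ∩
          ((if insert k F' = F then W F' else ∅) ∪ (if F' = F then (W F')ᶜ else ∅)) := by
      ext y
      simp only [Set.mem_preimage, Set.mem_singleton_iff, Set.mem_iUnion, Set.mem_inter_iff,
        Set.mem_union]
      constructor
      · intro h
        refine ⟨secC g C V k y, rfl, ?_⟩
        rw [secC] at h
        by_cases hw : y ∈ g '' ((C ∩ ⋂ j ∈ secC g C V k y, V j) ∩ V k)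
        · rw [if_pos hw] at h
          left; rw [if_pos h]; exact hw
        · rw [if_neg hw] at h
          right; rw [if_pos h]; exact hw
      · rintro ⟨F', hF', hcase⟩
        rw [secC, hF']
        rcases hcase with h | h
        · by_cases hif : insert k F' = F
          · rw [if_pos hif] at h
            rw [if_pos h]; exact hif
          · rw [if_neg hif] at h
            exact absurd h (Set.notMem_empty y)
        · by_cases hif : F' = F
          · rw [if_pos hif] at h
            rw [if_neg h]; exact hif
          · rw [if_neg hif] at h
            exact absurd h (Set.notMem_empty y)
    rw [heq]
    refine MeasurableSet.iUnion fun F' => (IH F').inter (MeasurableSet.union ?_ ?_)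
    · split_ifs
      · exact hWmeas F'
      · exact MeasurableSet.empty
    · split_ifs
      · exact (hWmeas F').compl
      · exact MeasurableSet.empty

end SectionConstruction

end Stmt17Aux
namespace Stmt17Aux

open Set Metric Filter Topology

section SectionConstruction2

variable {K L : Type*} [MetricSpace K] [CompactSpace K]
  [MeasurableSpace K] [BorelSpace K]
  [TopologicalSpace L] [T2Space L] [MeasurableSpace L] [BorelSpace L]

theorem exists_section (g : K → L) (hg : Continuous g) (C : Set K) (hC : IsClosed C)
    (x₀ : K) : ∃ s : L → K, Measurable s ∧ ∀ y ∈ g '' C, s y ∈ C ∧ g (s y) = y := by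
  classical
  haveI : Nonempty K := ⟨x₀⟩
  obtain ⟨D, hD⟩ := TopologicalSpace.exists_dense_seq K
  set V : ℕ → Set K := fun k => Metric.closedBall (D (Nat.unpair k).2)
    ((1/2 : ℝ) ^ (Nat.unpair k).1) with hV
  have hVclosed : ∀ j, IsClosed (V j) := fun j => Metric.isClosed_closedBall
  have hVprop : ∀ (x : K) (p : ℕ), ∃ k, x ∈ V k ∧
      ∀ a b : K, a ∈ V k → b ∈ V k → dist a b ≤ 2 * (1/2 : ℝ) ^ p := by
    intro x p
    obtain ⟨q, hq⟩ := hD.exists_dist_lt x (by positivity : (0:ℝ) < (1/2 : ℝ) ^ p)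
    refine ⟨Nat.pair p q, ?_, ?_⟩
    · rw [hV]
      simp only [Nat.unpair_pair]
      exact Metric.mem_closedBall.2 (by rw [dist_comm] at hq ⊢; exact le_of_lt hq)
    · intro a b ha hb
      rw [hV] at ha hb
      simp only [Nat.unpair_pair, Metric.mem_closedBall] at ha hb
      calc dist a b ≤ dist a (D q) + dist (D q) b := dist_triangle _ _ _
        _ ≤ (1/2:ℝ)^p + (1/2:ℝ)^p := add_le_add ha (by rw [dist_comm]; exact hb)
        _ = 2 * (1/2:ℝ)^p := by ring
  have hgC : MeasurableSet (g '' C) := ((hC.isCompact.image hg).isClosed).measurableSet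
  -- the approximating selections
  set pt : Finset ℕ → K := fun F =>
    if h : (C ∩ ⋂ j ∈ F, V j).Nonempty then h.some else x₀ with hpt
  set u : ℕ → L → K := fun k y => if y ∈ g '' C then pt (secC g C V k y) else x₀ with hu
  have humeas : ∀ k, Measurable (u k) := by
    intro k
    have h1 : Measurable (fun y => pt (secC g C V k y)) :=
      measurable_comp_countable_fibers (secC_fiber_measurable hg hC hVclosed k) pt
    exact Measurable.ite hgC h1 measurable_const
  have hmem : ∀ (y : L), y ∈ g '' C → ∀ k, u k y ∈ secS g C V k y := by
    intro y hy k
    have hne : (secS g C V k y).Nonempty := by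
      obtain ⟨x, hx, _⟩ := secS_inter_nonempty (g := g) (V := V) hy k
      exact ⟨x, hx⟩
    rw [hu]
    simp only [if_pos hy]
    rw [hpt]
    have hne' : (C ∩ ⋂ j ∈ secC g C V k y, V j).Nonempty := hne
    simp only [dif_pos hne']
    exact hne'.some_mem
  -- main structural fact
  have hmain : ∀ y ∈ g '' C, ∃ xinf : K, g xinf = y ∧ xinf ∈ C ∧
      ∀ p : ℕ, ∃ N, ∀ j, N ≤ j → ∀ a ∈ secS g C V j y, dist a xinf ≤ 2 * (1/2:ℝ)^p := by
    intro y hy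
    set T : ℕ → Set K := fun k => secS g C V k y ∩ g ⁻¹' {y} with hT
    have hTne : ∀ k, (T k).Nonempty := fun k => secS_inter_nonempty hy k
    have hTclosed : ∀ k, IsClosed (T k) := fun k =>
      (secS_closed hC hVclosed k y).inter (IsClosed.preimage hg isClosed_singleton)
    have hTsub : ∀ k, T (k+1) ⊆ T k := fun k =>
      Set.inter_subset_inter_left _ (secS_succ_subset k y)
    obtain ⟨xinf, hxinf⟩ := IsCompact.nonempty_iInter_of_sequence_nonempty_isCompact_isClosed
      T hTsub hTne ((hTclosed 0).isCompact) hTclosed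
    have hxinfS : ∀ k, xinf ∈ secS g C V k y := fun k =>
      (Set.mem_iInter.1 hxinf k).1
    have hgxinf : g xinf = y := by
      have := (Set.mem_iInter.1 hxinf 0).2
      simpa using this
    refine ⟨xinf, hgxinf, by simpa [secS_zero] using hxinfS 0, ?_⟩
    intro p
    obtain ⟨k, hxk, hdiam⟩ := hVprop xinf p
    have hbranch : secS g C V (k+1) y = secS g C V k y ∩ V k := by
      refine secS_succ_of_mem ⟨xinf, ⟨hxinfS k, hxk⟩, hgxinf⟩
    refine ⟨k+1, fun j hj a ha => ?_⟩
    have haV : a ∈ V k := by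
      have := secS_antitone hj y ha
      rw [hbranch] at this
      exact this.2
    exact hdiam a xinf haV hxk
  -- convergence of the approximations
  have htendsto_pow : Filter.Tendsto (fun p : ℕ => 2 * (1/2:ℝ)^p) Filter.atTop (𝓝 0) := by
    have h0 := tendsto_pow_atTop_nhds_zero_of_lt_one (by norm_num : (0:ℝ) ≤ 1/2)
      (by norm_num : (1/2:ℝ) < 1)
    have := h0.const_mul (2:ℝ)
    simpa using this
  have hex : ∀ ε : ℝ, 0 < ε → ∃ p : ℕ, 2 * (1/2:ℝ)^p < ε :=
    fun ε hε => (htendsto_pow.eventually (gt_mem_nhds hε)).exists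
  have hconv : ∀ y : L, ∃ z : K, Filter.Tendsto (fun k => u k y) Filter.atTop (𝓝 z) := by
    intro y
    by_cases hy : y ∈ g '' C
    · obtain ⟨xinf, _, _, hclose⟩ := hmain y hy
      refine ⟨xinf, Metric.tendsto_atTop.2 fun ε hε => ?_⟩
      obtain ⟨p, hp⟩ := hex ε hε
      obtain ⟨N, hN⟩ := hclose p
      exact ⟨N, fun j hj => lt_of_le_of_lt (hN j hj (u j y) (hmem y hy j)) hp⟩
    · refine ⟨x₀, ?_⟩
      have : (fun k => u k y) = fun _ => x₀ := by
        funext k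
        rw [hu]
        simp [hy]
      rw [this]
      exact tendsto_const_nhds
  set s : L → K := fun y => (hconv y).choose with hs
  have hstend : ∀ y, Filter.Tendsto (fun k => u k y) Filter.atTop (𝓝 (s y)) :=
    fun y => (hconv y).choose_spec
  have hsmeas : Measurable s :=
    measurable_of_tendsto_metrizable humeas (tendsto_pi_nhds.2 hstend)
  refine ⟨s, hsmeas, fun y hy => ?_⟩
  obtain ⟨xinf, hgxinf, hxinfC, hclose⟩ := hmain y hy
  have hxeq : s y = xinf := by
    have htend2 : Filter.Tendsto (fun k => u k y) Filter.atTop (𝓝 xinf) := by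
      refine Metric.tendsto_atTop.2 fun ε hε => ?_
      obtain ⟨p, hp⟩ := hex ε hε
      obtain ⟨N, hN⟩ := hclose p
      exact ⟨N, fun j hj => lt_of_le_of_lt (hN j hj (u j y) (hmem y hy j)) hp⟩
    exact tendsto_nhds_unique (hstend y) htend2
  rw [hxeq]
  exact ⟨hxinfC, hgxinf⟩

end SectionConstruction2

end Stmt17Aux
namespace Stmt17Aux

lemma map_finset_sum {α β ι : Type*} [MeasurableSpace α] [MeasurableSpace β] {f : α → β}
    (hf : Measurable f) (s : Finset ι) (μ : ι → MeasureTheory.Measure α) :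
    (∑ i ∈ s, μ i).map f = ∑ i ∈ s, (μ i).map f := by
  classical
  induction s using Finset.cons_induction with
  | empty => simp
  | cons a s ha IH =>
    rw [Finset.sum_cons, Finset.sum_cons, MeasureTheory.Measure.map_add _ _ hf, IH]

end Stmt17Aux

open MeasureTheory
open scoped NNReal ENNReal

theorem stmt17 {K L : Type*}
    [TopologicalSpace K] [CompactSpace K] [T2Space K]
    [TopologicalSpace.MetrizableSpace K] [MeasurableSpace K] [BorelSpace K]
    [TopologicalSpace L] [CompactSpace L] [T2Space L]
    [TopologicalSpace.MetrizableSpace L] [MeasurableSpace L] [BorelSpace L]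
    (g : K → L) (hg : Continuous g) (hsurj : Function.Surjective g)
    (n : ℕ) (U : Fin n → Set K) (hU : ∀ i, IsClosed (U i))
    (hdisj : Pairwise (Function.onFun Disjoint U))
    (c : Fin n → ℝ≥0)
    (lam : Measure L) [IsProbabilityMeasure lam] :
    (∀ A : Finset (Fin n), A.Nonempty →
        (∑ i ∈ A, (c i : ℝ≥0∞)) < lam (g '' ⋃ i ∈ A, U i)) ↔
      ∃ ν : Measure K, IsProbabilityMeasure ν ∧
        (∀ i, (c i : ℝ≥0∞) < ν (U i)) ∧ lam = ν.map g := by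
  classical
  have hgmeas : Measurable g := hg.measurable
  constructor
  · -- hard direction
    intro hlt
    haveI hLne : Nonempty L := by
      by_contra h
      rw [not_nonempty_iff] at h
      have h1 : lam Set.univ = 1 := measure_univ
      rw [Set.univ_eq_empty_iff.2 h, measure_empty] at h1
      exact zero_ne_one h1
    obtain ⟨y₀⟩ := hLne
    obtain ⟨x₀, -⟩ := hsurj y₀
    letI : MetricSpace K := TopologicalSpace.metrizableSpaceMetric K
    -- the partition pieces
    set X : Finset (Fin n) → Set L :=
      fun B => ⋂ i : Fin n, if i ∈ B then g '' U i else (g '' U i)ᶜ with hX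
    have hXmem : ∀ (B : Finset (Fin n)) (y : L),
        y ∈ X B ↔ ∀ i : Fin n, (y ∈ g '' U i ↔ i ∈ B) := by
      intro B y
      rw [hX]
      simp only [Set.mem_iInter]
      constructor
      · intro h i
        have hi2 := h i
        by_cases hi : i ∈ B
        · rw [if_pos hi] at hi2
          exact ⟨fun _ => hi, fun _ => hi2⟩
        · rw [if_neg hi] at hi2
          exact ⟨fun hy => absurd hy hi2, fun hi' => absurd hi' hi⟩
      · intro h i
        by_cases hi : i ∈ B
        · rw [if_pos hi]
          exact (h i).2 hi
        · rw [if_neg hi]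
          exact fun hy => hi ((h i).1 hy)
    have hGUmeas : ∀ i, MeasurableSet (g '' U i) :=
      fun i => (((hU i).isCompact.image hg).isClosed).measurableSet
    have hXmeas : ∀ B, MeasurableSet (X B) := by
      intro B
      rw [hX]
      refine MeasurableSet.iInter fun i => ?_
      by_cases hi : i ∈ B
      · rw [if_pos hi]; exact hGUmeas i
      · rw [if_neg hi]; exact (hGUmeas i).compl
    have hXdisj : ∀ (B B' : Finset (Fin n)) (y : L), y ∈ X B → y ∈ X B' → B = B' := by
      intro B B' y h1 h2
      refine Finset.ext fun i => ?_
      exact Iff.trans ((hXmem B y).1 h1 i).symm ((hXmem B' y).1 h2 i)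
    have hXuniv : ∀ y : L, y ∈ X (Finset.univ.filter fun i => y ∈ g '' U i) := by
      intro y
      refine (hXmem _ _).2 fun i => ?_
      simp
    have hcoverA : ∀ A : Finset (Fin n), (g '' ⋃ i ∈ A, U i) =
        ⋃ B ∈ Finset.univ.filter (fun B : Finset (Fin n) => (A ∩ B).Nonempty), X B := by
      intro A
      ext y
      simp only [Set.mem_image, Set.mem_iUnion, Finset.mem_filter, Finset.mem_univ, true_and]
      constructor
      · rintro ⟨x, hx, rfl⟩
        obtain ⟨i, hiA, hxU⟩ : ∃ i ∈ A, x ∈ U i := by simpa using hx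
        refine ⟨Finset.univ.filter (fun j => g x ∈ g '' U j), ⟨i, ?_⟩, hXuniv (g x)⟩
        rw [Finset.mem_inter]
        exact ⟨hiA, Finset.mem_filter.2 ⟨Finset.mem_univ _, ⟨x, hxU, rfl⟩⟩⟩
      · rintro ⟨B, hABne, hyB⟩
        obtain ⟨i, hi⟩ := hABne
        rw [Finset.mem_inter] at hi
        obtain ⟨x, hxU, rfl⟩ := ((hXmem B y).1 hyB i).2 hi.2
        exact ⟨x, by simpa using ⟨i, hi.1, hxU⟩, rfl⟩
    have hXpairwise : Pairwise (Function.onFun Disjoint X) := by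
      intro B B' hne
      exact Set.disjoint_left.2 fun {y} h1 h2 => hne (hXdisj B B' y h1 h2)
    have hlamA : ∀ A : Finset (Fin n), lam (g '' ⋃ i ∈ A, U i) =
        ∑ B ∈ Finset.univ.filter (fun B : Finset (Fin n) => (A ∩ B).Nonempty), lam (X B) := by
      intro A
      rw [hcoverA A]
      refine measure_biUnion_finset ?_ fun B _ => hXmeas B
      intro B _ B' _ hne
      exact hXpairwise hne
    set mNN : Finset (Fin n) → ℝ≥0 := fun B => (lam (X B)).toNNReal with hmNNdef
    have hmNN : ∀ B, ((mNN B : ℝ≥0∞)) = lam (X B) :=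
      fun B => ENNReal.coe_toNNReal (measure_ne_top lam _)
    have hfvalA : ∀ A : Finset (Fin n),
        ((Stmt17Aux.fval mNN A : ℝ≥0) : ℝ≥0∞) = lam (g '' ⋃ i ∈ A, U i) := by
      intro A
      rw [hlamA A, Stmt17Aux.fval, ENNReal.coe_finset_sum]
      exact Finset.sum_congr rfl fun B _ => hmNN B
    have hstrictNN : ∀ A : Finset (Fin n), A.Nonempty →
        ∑ i ∈ A, c i < Stmt17Aux.fval mNN A := by
      intro A hA
      have h1 := hlt A hA
      rw [← hfvalA A, ← ENNReal.coe_finset_sum] at h1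
      exact_mod_cast h1
    -- choose a uniform positive increment δ for the demands
    set T : Finset ℝ≥0 := (Finset.univ.powerset.erase ∅).image
      (fun A : Finset (Fin n) => (Stmt17Aux.fval mNN A - ∑ i ∈ A, c i) / (n : ℝ≥0)) with hT
    set δ : ℝ≥0 := if h : T.Nonempty then T.min' h else 1 with hδ
    have hδpos : ∀ _i : Fin n, 0 < δ := by
      intro i
      have hTne : T.Nonempty := ⟨_, Finset.mem_image_of_mem _
        (Finset.mem_erase.2 ⟨Finset.singleton_ne_empty i,
          Finset.mem_powerset.2 (Finset.subset_univ {i})⟩)⟩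
      simp only [hδ, dif_pos hTne]
      have hmem := T.min'_mem hTne
      obtain ⟨A, hA, hAe⟩ := Finset.mem_image.1 hmem
      rw [Finset.mem_erase, Finset.mem_powerset] at hA
      rw [← hAe]
      refine div_pos ?_ ?_
      · exact tsub_pos_of_lt (hstrictNN A (Finset.nonempty_iff_ne_empty.2 hA.1))
      · exact_mod_cast i.pos
    have hFeas : ∀ A : Finset (Fin n), A.Nonempty →
        ∑ i ∈ A, (c i + δ) ≤ Stmt17Aux.fval mNN A := by
      intro A hA
      have hnz : ((n : ℝ≥0)) ≠ 0 := by
        obtain ⟨i₀, -⟩ := hA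
        exact_mod_cast i₀.pos.ne'
      have hAmem : A ∈ (Finset.univ.powerset.erase ∅ : Finset (Finset (Fin n))) :=
        Finset.mem_erase.2 ⟨Finset.nonempty_iff_ne_empty.1 hA,
          Finset.mem_powerset.2 (Finset.subset_univ A)⟩
      have hTne : T.Nonempty := ⟨_, Finset.mem_image_of_mem _ hAmem⟩
      have hδle : δ ≤ (Stmt17Aux.fval mNN A - ∑ i ∈ A, c i) / (n : ℝ≥0) := by
        simp only [hδ, dif_pos hTne]
        exact Finset.min'_le _ _ (by rw [hT]; exact Finset.mem_image_of_mem _ hAmem)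
      have hcardn : A.card ≤ n := by
        simpa using Finset.card_le_univ A
      have hcard : ((A.card : ℝ≥0)) ≤ (n : ℝ≥0) := by exact_mod_cast hcardn
      calc ∑ i ∈ A, (c i + δ) = (∑ i ∈ A, c i) + A.card • δ := by
            rw [Finset.sum_add_distrib, Finset.sum_const]
        _ = (∑ i ∈ A, c i) + (A.card : ℝ≥0) * δ := by rw [nsmul_eq_mul]
        _ ≤ (∑ i ∈ A, c i) + (n : ℝ≥0) * δ :=
            add_le_add_right (mul_le_mul' hcard le_rfl) _
        _ ≤ (∑ i ∈ A, c i) + (n : ℝ≥0) *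
              ((Stmt17Aux.fval mNN A - ∑ i ∈ A, c i) / (n : ℝ≥0)) :=
            add_le_add_right (mul_le_mul' le_rfl hδle) _
        _ = (∑ i ∈ A, c i) + (Stmt17Aux.fval mNN A - ∑ i ∈ A, c i) := by
            rw [mul_comm, div_mul_cancel₀ _ hnz]
        _ = Stmt17Aux.fval mNN A := add_tsub_cancel_of_le (hstrictNN A hA).le
    obtain ⟨t, htsupp, htsup, htdem⟩ := Stmt17Aux.gale mNN (fun i => c i + δ) hFeas
    -- measurable sections
    have hsec : ∀ i : Fin n, ∃ s : L → K, Measurable s ∧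
        ∀ y ∈ g '' U i, s y ∈ U i ∧ g (s y) = y :=
      fun i => Stmt17Aux.exists_section g hg (U i) (hU i) x₀
    choose s hsmeas hsprop using hsec
    obtain ⟨s0, hs0meas, hs0prop⟩ := Stmt17Aux.exists_section g hg Set.univ isClosed_univ x₀
    have hs0 : ∀ y, g (s0 y) = y := by
      intro y
      refine (hs0prop y ?_).2
      rw [Set.image_univ, hsurj.range_eq]
      trivial
    -- build the lift ν
    set μB : Finset (Fin n) → Measure L := fun B => lam.restrict (X B) with hμB
    set coef : Finset (Fin n) → Fin n → ℝ≥0∞ := fun B i => (t B i : ℝ≥0∞) / lam (X B)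
      with hcoef
    set rest : Finset (Fin n) → ℝ≥0∞ := fun B => 1 - ∑ i : Fin n, coef B i with hrest
    set ν : Measure K := ∑ B : Finset (Fin n),
      ((∑ i : Fin n, coef B i • ((μB B).map (s i))) + rest B • ((μB B).map s0)) with hν
    -- each piece maps back onto lam restricted to X B
    have hsumcoef : ∀ B, lam (X B) ≠ 0 → (∑ i : Fin n, coef B i) ≤ 1 := by
      intro B _
      rw [hcoef]
      simp only [div_eq_mul_inv]
      rw [← Finset.sum_mul, ← div_eq_mul_inv]
      refine ENNReal.div_le_of_le_mul ?_
      rw [one_mul, ← hmNN B, ← ENNReal.coe_finset_sum]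
      exact_mod_cast htsup B
    have hmapB : ∀ B : Finset (Fin n),
        ((∑ i : Fin n, coef B i • ((μB B).map (s i))) + rest B • ((μB B).map s0)).map g
          = μB B := by
      intro B
      rw [Measure.map_add _ _ hgmeas, Stmt17Aux.map_finset_sum hgmeas, Measure.map_smul]
      have hs0term : ((μB B).map s0).map g = μB B := by
        rw [Measure.map_map hgmeas hs0meas]
        have hae : (g ∘ s0) =ᵐ[μB B] id := Filter.Eventually.of_forall fun y => hs0 y
        rw [Measure.map_congr hae, Measure.map_id]
      rw [hs0term]
      have hterm : ∀ i : Fin n, (coef B i • ((μB B).map (s i))).map g = coef B i • μB B := by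
        intro i
        rw [Measure.map_smul]
        by_cases hiB : i ∈ B
        · congr 1
          rw [Measure.map_map hgmeas (hsmeas i)]
          have hae : (g ∘ s i) =ᵐ[μB B] id := by
            rw [hμB, Filter.EventuallyEq, ae_restrict_iff' (hXmeas B)]
            refine Filter.Eventually.of_forall fun y hy => ?_
            exact (hsprop i y (((hXmem B y).1 hy i).2 hiB)).2
          rw [Measure.map_congr hae, Measure.map_id]
        · have ht0 : t B i = 0 := by
            by_contra h
            exact hiB (htsupp B i h)
          have hc0 : coef B i = 0 := by rw [hcoef]; simp [ht0]
          rw [hc0, zero_smul, zero_smul]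
      rw [Finset.sum_congr rfl fun i _ => hterm i]
      by_cases h0 : lam (X B) = 0
      · have hzero : μB B = 0 := by rw [hμB]; exact Measure.restrict_eq_zero.2 h0
        simp [hzero]
      · rw [← Finset.sum_smul, ← add_smul, hrest,
          add_tsub_cancel_of_le (hsumcoef B h0), one_smul]
    have hmapg : ν.map g = lam := by
      rw [hν, Stmt17Aux.map_finset_sum hgmeas]
      rw [Finset.sum_congr rfl fun B _ => hmapB B]
      have hcup : ⋃ B : Finset (Fin n), X B = Set.univ :=
        Set.eq_univ_iff_forall.2 fun y => Set.mem_iUnion.2 ⟨_, hXuniv y⟩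
      have h1 := Measure.restrict_iUnion (μ := lam) hXpairwise hXmeas
      rw [hcup, Measure.restrict_univ, Measure.sum_fintype] at h1
      rw [hμB]
      exact h1.symm
    have hproba : IsProbabilityMeasure ν := by
      constructor
      rw [← Set.preimage_univ (f := g), ← Measure.map_apply hgmeas MeasurableSet.univ, hmapg]
      exact measure_univ
    refine ⟨ν, hproba, fun i => ?_, hmapg.symm⟩
    -- the lower bound on ν (U i)
    have hνU : (∑ B : Finset (Fin n), (t B i : ℝ≥0∞)) ≤ ν (U i) := by
      rw [hν, Measure.finset_sum_apply]
      refine Finset.sum_le_sum fun B _ => ?_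
      rw [Measure.add_apply, Measure.finset_sum_apply]
      simp only [Measure.smul_apply, smul_eq_mul]
      have hterm : (t B i : ℝ≥0∞) ≤ coef B i * ((μB B).map (s i)) (U i) := by
        by_cases h0 : lam (X B) = 0
        · have hm0 : mNN B = 0 := by rw [hmNNdef]; simp [h0]
          have ht0 : t B i = 0 := by
            have h2 : t B i ≤ (0 : ℝ≥0) := by
              rw [← hm0]
              exact le_trans (Finset.single_le_sum (fun j _ => zero_le)
                (Finset.mem_univ i)) (htsup B)
            exact le_antisymm h2 zero_le
          simp [ht0]
        · by_cases hiB : i ∈ B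
          · have hmap : lam (X B) ≤ ((μB B).map (s i)) (U i) := by
              rw [Measure.map_apply (hsmeas i) (hU i).measurableSet]
              calc lam (X B) = (μB B) (X B) := by
                    rw [hμB]; exact (Measure.restrict_apply_self _ _).symm
                _ ≤ (μB B) (s i ⁻¹' U i) := by
                    refine measure_mono fun y hy => ?_
                    exact (hsprop i y (((hXmem B y).1 hy i).2 hiB)).1
            calc (t B i : ℝ≥0∞) = coef B i * lam (X B) := by
                  rw [hcoef]
                  exact (ENNReal.div_mul_cancel h0 (measure_ne_top lam _)).symm
              _ ≤ coef B i * ((μB B).map (s i)) (U i) := mul_le_mul_right hmap _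
          · have ht0 : t B i = 0 := by
              by_contra h
              exact hiB (htsupp B i h)
            simp [ht0]
      refine le_trans hterm (le_add_right ?_)
      exact Finset.single_le_sum
        (f := fun j => coef B j * ((μB B).map (s j)) (U i))
        (fun j _ => zero_le) (Finset.mem_univ i)
    calc (c i : ℝ≥0∞) < (c i : ℝ≥0∞) + (δ : ℝ≥0∞) :=
          ENNReal.lt_add_right ENNReal.coe_ne_top (by exact_mod_cast (hδpos i).ne')
      _ = ((c i + δ : ℝ≥0) : ℝ≥0∞) := (ENNReal.coe_add _ _).symm
      _ ≤ ∑ B : Finset (Fin n), (t B i : ℝ≥0∞) := by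
          rw [← ENNReal.coe_finset_sum]
          exact_mod_cast htdem i
      _ ≤ ν (U i) := hνU
  · -- easy direction
    rintro ⟨ν, hν, hνU, rfl⟩ A hAne
    have hset : MeasurableSet (g '' ⋃ i ∈ A, U i) := by
      have hcomp : IsCompact (⋃ i ∈ A, U i) :=
        (A.finite_toSet).isCompact_biUnion fun i _ => (hU i).isCompact
      exact ((hcomp.image hg).isClosed).measurableSet
    rw [Measure.map_apply hgmeas hset]
    have h2 : ν (⋃ i ∈ A, U i) = ∑ i ∈ A, ν (U i) := by
      refine measure_biUnion_finset ?_ fun i _ => (hU i).measurableSet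
      intro i _ j _ hij
      exact hdisj hij
    calc (∑ i ∈ A, (c i : ℝ≥0∞)) < ∑ i ∈ A, ν (U i) :=
          ENNReal.sum_lt_sum_of_nonempty hAne fun i _ => hνU i
      _ = ν (⋃ i ∈ A, U i) := h2.symm
      _ ≤ ν (g ⁻¹' (g '' ⋃ i ∈ A, U i)) := measure_mono (Set.subset_preimage_image g _)
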